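/- For every integer n ≥ 3 and every p ≥ 1, Γ_{2^n}(Kₙ^p) ≤ (n/(n+1))^{1/p} < 1. -/

import Mathlib

open Real Set Pointwise

/-- The covering functional `Γ_m(K)`: the infimum of all `γ > 0` such that `K` can be
covered by `m` translates of `γ • K`. -/
noncomputable def coveringFunctional {n : ℕ} (m : ℕ) (K : Set (Fin n → ℝ)) : ℝ :=
  sInf {γ : ℝ | 0 < γ ∧ ∃ C : Set (Fin n → ℝ), C.Finite ∧ C.ncard = m ∧ K ⊆ C + γ • K}

/-- `Kₙ^p`: the unit ball of `ℓ_p^n`. -/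
noncomputable def Kp (n : ℕ) (p : ℝ) : Set (Fin n → ℝ) :=
  {x | (∑ i, |x i| ^ p) ≤ 1}

lemma two_mul_le_two_pow (n : ℕ) (hn : 2 ≤ n) : 2 * n ≤ 2 ^ n := by
  induction n with
  | zero => omega
  | succ m ih =>
    rcases Nat.lt_or_ge m 2 with h | h
    · interval_cases m <;> omega
    · have h1 := ih h
      have h2 : 2 ≤ 2 ^ m := Nat.one_lt_two_pow_iff.mpr (by omega)
      have h3 : 2 ^ (m + 1) = 2 ^ m + 2 ^ m := by ring
      omega

/-- The family of points used as covering centers (first `2n` of them) together with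
padding points. -/
noncomputable def padFun (n : ℕ) (c : ℝ) (k : ℕ) : Fin n → ℝ :=
  if h : k < n then Pi.single ⟨k, h⟩ c
  else if h2 : k < 2 * n then Pi.single ⟨k - n, by omega⟩ (-c)
  else fun _ => (k : ℝ)

lemma padFun_inj {n : ℕ} {c : ℝ} (hn : 2 ≤ n) (hc0 : 0 < c) (hc1 : c < 1) :
    Function.Injective (padFun n c) := by
  intro a b hab
  by_cases ha1 : a < n
  · by_cases hb1 : b < n
    · simp only [padFun, dif_pos ha1, dif_pos hb1] at hab
      have h2 := congrFun hab ⟨a, ha1⟩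
      rw [Pi.single_eq_same, Pi.single_apply] at h2
      split_ifs at h2 with h
      · simp only [Fin.mk.injEq] at h
        exact h
      · linarith
    · by_cases hb2 : b < 2 * n
      · simp only [padFun, dif_pos ha1, dif_neg hb1, dif_pos hb2] at hab
        have h2 := congrFun hab ⟨a, ha1⟩
        rw [Pi.single_eq_same, Pi.single_apply] at h2
        split_ifs at h2 <;> linarith
      · simp only [padFun, dif_pos ha1, dif_neg hb1, dif_neg hb2] at hab
        have h2 := congrFun hab ⟨a, ha1⟩
        rw [Pi.single_eq_same] at h2
        have hb4 : (4 : ℝ) ≤ (b : ℝ) := by exact_mod_cast (by omega : 4 ≤ b)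
        linarith
  · by_cases ha2 : a < 2 * n
    · by_cases hb1 : b < n
      · simp only [padFun, dif_neg ha1, dif_pos ha2, dif_pos hb1] at hab
        have h2 := congrFun hab ⟨a - n, by omega⟩
        rw [Pi.single_eq_same, Pi.single_apply] at h2
        split_ifs at h2 <;> linarith
      · by_cases hb2 : b < 2 * n
        · simp only [padFun, dif_neg ha1, dif_pos ha2, dif_neg hb1, dif_pos hb2] at hab
          have h2 := congrFun hab ⟨a - n, by omega⟩
          rw [Pi.single_eq_same, Pi.single_apply] at h2
          split_ifs at h2 with h
          · simp only [Fin.mk.injEq] at h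
            omega
          · linarith
        · simp only [padFun, dif_neg ha1, dif_pos ha2, dif_neg hb1, dif_neg hb2] at hab
          have h2 := congrFun hab ⟨a - n, by omega⟩
          rw [Pi.single_eq_same] at h2
          have hb0 : (0 : ℝ) ≤ (b : ℝ) := by positivity
          linarith
    · by_cases hb1 : b < n
      · simp only [padFun, dif_neg ha1, dif_neg ha2, dif_pos hb1] at hab
        have h2 := congrFun hab ⟨b, hb1⟩
        simp only [Pi.single_eq_same] at h2
        have ha4 : (4 : ℝ) ≤ (a : ℝ) := by exact_mod_cast (by omega : 4 ≤ a)
        linarith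
      · by_cases hb2 : b < 2 * n
        · simp only [padFun, dif_neg ha1, dif_neg ha2, dif_neg hb1, dif_pos hb2] at hab
          have h2 := congrFun hab ⟨b - n, by omega⟩
          simp only [Pi.single_eq_same] at h2
          have ha0 : (0 : ℝ) ≤ (a : ℝ) := by positivity
          linarith
        · simp only [padFun, dif_neg ha1, dif_neg ha2, dif_neg hb1, dif_neg hb2] at hab
          have h2 := congrFun hab ⟨0, by omega⟩
          exact_mod_cast h2

/-- Superadditivity of `u ↦ u ^ p` on `[0, ∞)` for `p ≥ 1`. -/
lemma rpow_superadd {x y p : ℝ} (hx : 0 ≤ x) (hy : 0 ≤ y) (hp : 1 ≤ p) :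
    x ^ p + y ^ p ≤ (x + y) ^ p := by
  have h := NNReal.add_rpow_le_rpow_add (Real.toNNReal x) (Real.toNNReal y) hp
  have h2 := NNReal.coe_le_coe.2 h
  rw [NNReal.coe_rpow, NNReal.coe_add, NNReal.coe_rpow, NNReal.coe_rpow,
    NNReal.coe_add, Real.coe_toNNReal _ hx, Real.coe_toNNReal _ hy] at h2
  exact h2

/-- The key one-dimensional estimate. -/
lemma key_est {p c t S N : ℝ} (hp : 1 ≤ p) (hN : 3 ≤ N) (hc : 0 ≤ c) (ht : 0 ≤ t)
    (hS1 : S ≤ 1) (hSn : S ≤ N * t ^ p) (hcp : c ^ p = 1 / (N + 1)) :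
    S - t ^ p + |t - c| ^ p ≤ N / (N + 1) := by
  have hp0 : (0 : ℝ) ≤ p := by linarith
  have hN1 : (0 : ℝ) < N + 1 := by linarith
  have htp : (0 : ℝ) ≤ t ^ p := Real.rpow_nonneg ht p
  rcases le_or_gt c t with h | h
  · have h1 : (t - c) ^ p + c ^ p ≤ t ^ p := by
      have := rpow_superadd (sub_nonneg.2 h) hc hp
      simpa using this
    have habs : |t - c| = t - c := abs_of_nonneg (by linarith)
    rw [habs]
    have hgoal : N / (N + 1) = 1 - 1 / (N + 1) := by field_simp; ring
    rw [hgoal]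
    linarith [hcp ▸ h1]
  · have h1 : (c - t) ^ p + t ^ p ≤ c ^ p := by
      have := rpow_superadd (sub_nonneg.2 h.le) ht hp
      simpa using this
    have habs : |t - c| = c - t := by
      rw [abs_sub_comm]; exact abs_of_nonneg (by linarith)
    rw [habs]
    have htc : t ^ p ≤ c ^ p := Real.rpow_le_rpow ht h.le hp0
    have hcpv : c ^ p = 1 / (N + 1) := hcp
    have hpos : (0 : ℝ) < 1 / (N + 1) := by positivity
    -- S - t^p + (c-t)^p ≤ N t^p - 2 t^p + c^p ≤ (N-1) c^p ≤ N c^p = N/(N+1)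
    have step1 : S - t ^ p + (c - t) ^ p ≤ (N - 2) * t ^ p + c ^ p := by nlinarith
    have step2 : (N - 2) * t ^ p + c ^ p ≤ (N - 1) * c ^ p := by nlinarith
    have step3 : (N - 1) * (1 / (N + 1)) ≤ N / (N + 1) := by
      rw [mul_one_div, div_le_div_iff₀ hN1 hN1]
      nlinarith
    calc S - t ^ p + (c - t) ^ p ≤ (N - 1) * c ^ p := by linarith
      _ = (N - 1) * (1 / (N + 1)) := by rw [hcpv]
      _ ≤ N / (N + 1) := step3

/-- For every integer `n ≥ 3` and every `p ≥ 1`,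
`Γ_{2^n}(Kₙ^p) ≤ (n/(n+1))^(1/p) < 1`. -/
theorem coveringFunctional_two_pow_Kp (n : ℕ) (hn : 3 ≤ n) (p : ℝ) (hp : 1 ≤ p) :
    coveringFunctional (2 ^ n) (Kp n p) ≤ ((n : ℝ) / ((n : ℝ) + 1)) ^ (1 / p) ∧
      ((n : ℝ) / ((n : ℝ) + 1)) ^ (1 / p) < 1 := by
  have hp0 : (0 : ℝ) < p := by linarith
  set N : ℝ := (n : ℝ) with hNdef
  have hN3 : (3 : ℝ) ≤ N := by rw [hNdef]; exact_mod_cast hn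
  have hN1 : (0 : ℝ) < N + 1 := by linarith
  have hbase_pos : (0 : ℝ) < N / (N + 1) := by positivity
  have hbase_lt : N / (N + 1) < 1 := by
    rw [div_lt_one hN1]; linarith
  set γ : ℝ := (N / (N + 1)) ^ (1 / p) with hγdef
  have hγ0 : 0 < γ := Real.rpow_pos_of_pos hbase_pos _
  have hγ1 : γ < 1 := Real.rpow_lt_one hbase_pos.le hbase_lt (by positivity)
  have hγp : γ ^ p = N / (N + 1) := by
    rw [hγdef, ← Real.rpow_mul hbase_pos.le, one_div,
      inv_mul_cancel₀ hp0.ne', Real.rpow_one]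
  set c : ℝ := (1 / (N + 1)) ^ (1 / p) with hcdef
  have hc0 : 0 < c := Real.rpow_pos_of_pos (by positivity) _
  have hc1 : c < 1 := Real.rpow_lt_one (by positivity)
    (by rw [div_lt_one hN1]; linarith) (by positivity)
  have hcp : c ^ p = 1 / (N + 1) := by
    rw [hcdef, ← Real.rpow_mul (by positivity), one_div p,
      inv_mul_cancel₀ hp0.ne', Real.rpow_one]
  refine ⟨?_, hγ1⟩
  -- the covering set
  set C : Set (Fin n → ℝ) := ↑((Finset.range (2 ^ n)).image (padFun n c)) with hCdef
  have hinj : Function.Injective (padFun n c) := padFun_inj (by omega) hc0 hc1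
  have hCfin : C.Finite := (Finset.finite_toSet _)
  have hCcard : C.ncard = 2 ^ n := by
    rw [hCdef, Set.ncard_coe_finset, Finset.card_image_of_injective _ hinj,
      Finset.card_range]
  have h2n : 2 * n ≤ 2 ^ n := two_mul_le_two_pow n (by omega)
  -- the covering property
  have hcover : Kp n p ⊆ C + γ • Kp n p := by
    intro x hx
    simp only [Kp, mem_setOf_eq] at hx
    -- choose a coordinate with maximal absolute value
    have huniv : (Finset.univ : Finset (Fin n)).Nonempty :=
      ⟨⟨0, by omega⟩, Finset.mem_univ _⟩
    obtain ⟨i, -, hi⟩ := Finset.exists_max_image Finset.univ (fun j => |x j|) huniv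
    set t : ℝ := |x i| with htdef
    have ht0 : 0 ≤ t := abs_nonneg _
    set s : ℝ := if 0 ≤ x i then c else -c with hsdef
    set v : Fin n → ℝ := Pi.single i s with hvdef
    -- v ∈ C
    have hvC : v ∈ C := by
      rw [hCdef]
      simp only [Finset.coe_image, Set.mem_image, Finset.mem_coe, Finset.mem_range]
      have hiv : i.val < n := i.isLt
      by_cases h0 : 0 ≤ x i
      · refine ⟨i.val, by omega, ?_⟩
        rw [hvdef, hsdef, if_pos h0]
        simp [padFun, i.isLt]
      · refine ⟨n + i.val, by omega, ?_⟩
        rw [hvdef, hsdef, if_neg h0]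
        have h1 : ¬ (n + i.val < n) := by omega
        have h2 : n + i.val < 2 * n := by omega
        simp only [padFun, dif_neg h1, dif_pos h2]
        have h3 : (⟨n + i.val - n, by omega⟩ : Fin n) = i :=
          Fin.ext (by simp only [Fin.val_mk]; omega)
        exact congrArg (fun j => Pi.single j (-c)) h3
    -- the main estimate : ∑ |x j - v j|^p ≤ N/(N+1)
    have hS : ∑ j, |x j| ^ p = (∑ j ∈ Finset.univ.erase i, |x j| ^ p) + t ^ p :=
      (Finset.sum_erase_add _ _ (Finset.mem_univ i)).symm
    have hSn : ∑ j, |x j| ^ p ≤ N * t ^ p := by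
      calc ∑ j, |x j| ^ p ≤ ∑ _j : Fin n, t ^ p := by
            apply Finset.sum_le_sum
            intro j _
            exact Real.rpow_le_rpow (abs_nonneg _) (hi j (Finset.mem_univ j)) hp0.le
        _ = N * t ^ p := by
            rw [Finset.sum_const, Finset.card_univ, Fintype.card_fin, nsmul_eq_mul]
    have hxis : |x i - s| = |t - c| := by
      by_cases h0 : 0 ≤ x i
      · rw [hsdef, if_pos h0, htdef, abs_of_nonneg h0]
      · rw [hsdef, if_neg h0, htdef, abs_of_neg (not_le.1 h0)]
        rw [sub_neg_eq_add, ← abs_neg]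
        congr 1
        ring
    have hmain : ∑ j, |x j - v j| ^ p ≤ N / (N + 1) := by
      have hsplit : ∑ j, |x j - v j| ^ p
          = (∑ j ∈ Finset.univ.erase i, |x j| ^ p) + |t - c| ^ p := by
        rw [← Finset.sum_erase_add _ _ (Finset.mem_univ i)]
        congr 1
        · apply Finset.sum_congr rfl
          intro j hj
          have hji : j ≠ i := Finset.ne_of_mem_erase hj
          rw [hvdef, Pi.single_eq_of_ne hji, sub_zero]
        · rw [hvdef, Pi.single_eq_same, hxis]
      rw [hsplit]
      have hkey := key_est (S := ∑ j, |x j| ^ p) (t := t) (c := c) (N := N)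
        hp hN3 hc0.le ht0 hx hSn hcp
      rw [hS] at hkey
      linarith [hkey]
    -- conclude membership
    rw [Set.mem_add]
    refine ⟨v, hvC, x - v, ?_, by abel⟩
    rw [Set.mem_smul_set_iff_inv_smul_mem₀ hγ0.ne']
    simp only [Kp, mem_setOf_eq]
    have heq : ∀ j, |(γ⁻¹ • (x - v)) j| ^ p = (γ ^ p)⁻¹ * |x j - v j| ^ p := by
      intro j
      rw [Pi.smul_apply, Pi.sub_apply, smul_eq_mul, abs_mul,
        abs_of_pos (inv_pos.2 hγ0), Real.mul_rpow (inv_pos.2 hγ0).le (abs_nonneg _),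
        ← Real.inv_rpow hγ0.le]
    calc ∑ j, |(γ⁻¹ • (x - v)) j| ^ p = (γ ^ p)⁻¹ * ∑ j, |x j - v j| ^ p := by
          rw [Finset.mul_sum]
          exact Finset.sum_congr rfl fun j _ => heq j
      _ ≤ (γ ^ p)⁻¹ * (N / (N + 1)) := by
          apply mul_le_mul_of_nonneg_left hmain
          rw [hγp]; positivity
      _ = 1 := by rw [hγp]; field_simp
  -- take the infimum
  apply csInf_le
  · exact ⟨0, fun γ' hγ' => hγ'.1.le⟩
  · exact ⟨hγ0, C, hCfin, hCcard, hcover⟩
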